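/- arXiv:2509.07474 — 5 statements merged into one kernel-verified Lean document; each statement's English description precedes it below -/
import Mathlib

section
/- Let P₀ be an n_x×n_x real matrix such that S₀ := H·P₀·Hᵀ + R is invertible, and set K₀ := P₀·Hᵀ·S₀⁻¹. Then the Kalman-gain map P ↦ K(P) = P·Hᵀ·(S(P))⁻¹ is Fréchet differentiable at P₀, and its derivative is the linear map Δ ↦ (I − K₀·H) · Δ · Hᵀ · S₀⁻¹; equivalently, the derivative applied to Δ equals Δ·Hᵀ·S₀⁻¹ − P₀·Hᵀ·S₀⁻¹·H·Δ·Hᵀ·S₀⁻¹. -/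
open Matrix

attribute [local instance] Matrix.normedAddCommGroup Matrix.normedSpace

namespace KalmanAux

variable {l m n p : Type*} [Fintype l] [Fintype m] [Fintype n] [Fintype p]

noncomputable def entryCLM (i : m) (j : n) : Matrix m n ℝ →L[ℝ] ℝ :=
  LinearMap.toContinuousLinearMap
    { toFun := fun A => A i j
      map_add' := fun _ _ => rfl
      map_smul' := fun _ _ => rfl }

lemma differentiable_entry (i : m) (j : n) :
    Differentiable ℝ (fun A : Matrix m n ℝ => A i j) :=
  (entryCLM i j).differentiable

lemma differentiable_det [DecidableEq n] :
    Differentiable ℝ (fun A : Matrix n n ℝ => A.det) := by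
  simp only [Matrix.det_apply']
  refine Differentiable.fun_sum fun σ _ => Differentiable.const_mul ?_ _
  intro A
  exact (HasFDerivAt.finset_prod (fun i _ =>
    ((differentiable_entry (σ i) i) A).hasFDerivAt)).differentiableAt

/-- updateRow with a fixed row, as a linear-plus-constant decomposition -/
noncomputable def updateRowCLM [DecidableEq n] (j : n) : Matrix n n ℝ →L[ℝ] Matrix n n ℝ :=
  LinearMap.toContinuousLinearMap
    { toFun := fun A => A.updateRow j 0
      map_add' := by
        intro A B
        ext k l
        simp only [Matrix.updateRow_apply, Pi.zero_apply, Matrix.add_apply]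
        split <;> simp
      map_smul' := by
        intro c A
        ext k l
        simp only [Matrix.updateRow_apply, Pi.zero_apply, Matrix.smul_apply,
          RingHom.id_apply]
        split <;> simp }

lemma updateRow_eq [DecidableEq n] (j : n) (c : n → ℝ) (A : Matrix n n ℝ) :
    A.updateRow j c = updateRowCLM j A + (0 : Matrix n n ℝ).updateRow j c := by
  ext k l
  simp [updateRowCLM, Matrix.updateRow_apply]
  split <;> simp

lemma differentiable_adjugate_entry [DecidableEq n] (i j : n) :
    Differentiable ℝ (fun A : Matrix n n ℝ => A.adjugate i j) := by
  simp only [Matrix.adjugate_apply]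
  have : (fun A : Matrix n n ℝ => (A.updateRow j (Pi.single i 1)).det)
      = (fun A => (updateRowCLM j A + (0 : Matrix n n ℝ).updateRow j (Pi.single i 1)).det) := by
    funext A; rw [updateRow_eq]
  rw [this]
  exact differentiable_det.comp ((updateRowCLM j).differentiable.add_const _)

/-- every matrix-valued map with differentiable entries is differentiable -/
lemma differentiableAt_of_entries [DecidableEq m] [DecidableEq n]
    {E : Type*} [NormedAddCommGroup E] [NormedSpace ℝ E]
    {f : E → Matrix m n ℝ} {x : E}
    (h : ∀ i j, DifferentiableAt ℝ (fun y => f y i j) x) :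
    DifferentiableAt ℝ f x := by
  have hf : f = fun y => ∑ i : m, ∑ j : n, f y i j • Matrix.single i j 1 := by
    funext y
    simp_rw [Matrix.smul_single, smul_eq_mul, mul_one]
    exact (Matrix.matrix_eq_sum_single (f y))
  rw [hf]
  exact DifferentiableAt.fun_sum fun i _ => DifferentiableAt.fun_sum fun j _ =>
    ((h i j).smul_const _)

lemma differentiableAt_inv [DecidableEq n] {A₀ : Matrix n n ℝ} (h : A₀.det ≠ 0) :
    DifferentiableAt ℝ (fun A : Matrix n n ℝ => A⁻¹) A₀ := by
  have key : (fun A : Matrix n n ℝ => A⁻¹) = fun A => (A.det)⁻¹ • A.adjugate := by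
    funext A
    rw [Matrix.inv_def, Ring.inverse_eq_inv']
  rw [key]
  apply DifferentiableAt.smul (c := fun A : Matrix n n ℝ => (A.det)⁻¹) (f := fun A => A.adjugate)
  · exact (differentiable_det A₀).inv h
  · exact differentiableAt_of_entries fun i j => (differentiable_adjugate_entry i j) A₀

/-- matrix multiplication is a bounded bilinear map for the sup norm -/
lemma isBoundedBilinearMap_mul :
    IsBoundedBilinearMap ℝ
      (fun q : Matrix l m ℝ × Matrix m n ℝ => q.1 * q.2) where
  add_left _ _ _ := Matrix.add_mul _ _ _
  smul_left _ _ _ := Matrix.smul_mul _ _ _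
  add_right _ _ _ := Matrix.mul_add _ _ _
  smul_right _ _ _ := Matrix.mul_smul _ _ _
  bound := by
    refine ⟨(Fintype.card m : ℝ) + 1, by positivity, fun A B => ?_⟩
    have hAB : ∀ i j, ‖(A * B) i j‖ ≤ ((Fintype.card m : ℝ) + 1) * ‖A‖ * ‖B‖ := by
      intro i j
      calc ‖(A * B) i j‖ = ‖∑ k, A i k * B k j‖ := rfl
        _ ≤ ∑ k, ‖A i k * B k j‖ := norm_sum_le _ _
        _ ≤ ∑ _k : m, ‖A‖ * ‖B‖ := by
            refine Finset.sum_le_sum fun k _ => ?_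
            rw [norm_mul]
            exact mul_le_mul (Matrix.norm_entry_le_entrywise_sup_norm A)
              (Matrix.norm_entry_le_entrywise_sup_norm B) (norm_nonneg _) (norm_nonneg _)
        _ = (Fintype.card m : ℝ) * (‖A‖ * ‖B‖) := by
            rw [Finset.sum_const, Finset.card_univ, nsmul_eq_mul]
        _ ≤ ((Fintype.card m : ℝ) + 1) * ‖A‖ * ‖B‖ := by
            rw [mul_assoc]
            apply mul_le_mul_of_nonneg_right (by linarith) (by positivity)
    exact Matrix.norm_le_iff (by positivity) |>.2 hAB

/-- product rule for matrix-valued maps -/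
lemma HasFDerivAt.matmul {E : Type*} [NormedAddCommGroup E] [NormedSpace ℝ E]
    {f : E → Matrix l m ℝ} {g : E → Matrix m n ℝ}
    {f' : E →L[ℝ] Matrix l m ℝ} {g' : E →L[ℝ] Matrix m n ℝ} {x : E}
    (hf : HasFDerivAt f f' x) (hg : HasFDerivAt g g' x) :
    HasFDerivAt (fun y => f y * g y)
      ((isBoundedBilinearMap_mul.deriv (f x, g x)).comp (f'.prod g')) x :=
  by have := ((isBoundedBilinearMap_mul (l := l) (m := m) (n := n)).hasFDerivAt (f x, g x)).comp x (hf.prodMk hg); exact this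

lemma hasFDerivAt_inverse [DecidableEq n] {A₀ : Matrix n n ℝ} (h : IsUnit A₀) :
    ∃ D : Matrix n n ℝ →L[ℝ] Matrix n n ℝ,
      HasFDerivAt (fun A : Matrix n n ℝ => A⁻¹) D A₀ ∧
      ∀ Δ, D Δ = -(A₀⁻¹ * Δ * A₀⁻¹) := by
  have hdet : A₀.det ≠ 0 :=
    isUnit_iff_ne_zero.1 ((Matrix.isUnit_iff_isUnit_det A₀).1 h)
  have hdiff := differentiableAt_inv (n := n) hdet
  set D := fderiv ℝ (fun A : Matrix n n ℝ => A⁻¹) A₀ with hD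
  have hd : HasFDerivAt (fun A : Matrix n n ℝ => A⁻¹) D A₀ := hdiff.hasFDerivAt
  -- product (fun A => A⁻¹ * A) has derivative from the product rule
  have hid : HasFDerivAt (fun A : Matrix n n ℝ => A)
      (ContinuousLinearMap.id ℝ (Matrix n n ℝ)) A₀ := hasFDerivAt_id A₀
  have h1 : HasFDerivAt (fun A : Matrix n n ℝ => A⁻¹ * A)
      (((isBoundedBilinearMap_mul (l := n) (m := n) (n := n)).deriv (A₀⁻¹, A₀)).comp
        (D.prod (ContinuousLinearMap.id ℝ (Matrix n n ℝ)))) A₀ :=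
    KalmanAux.HasFDerivAt.matmul hd hid
  -- and it is eventually equal to the constant 1
  have hev : (fun A : Matrix n n ℝ => A⁻¹ * A) =ᶠ[nhds A₀] fun _ => 1 := by
    have hcont : ContinuousAt (fun A : Matrix n n ℝ => A.det) A₀ :=
      differentiable_det.continuous.continuousAt
    filter_upwards [hcont.eventually_ne hdet] with A hA
    exact Matrix.nonsing_inv_mul A (isUnit_iff_ne_zero.2 hA)
  have h2 : HasFDerivAt (fun A : Matrix n n ℝ => A⁻¹ * A) 0 A₀ :=
    (hasFDerivAt_const (𝕜 := ℝ) (1 : Matrix n n ℝ) A₀).congr_of_eventuallyEq hev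
  have hzero := h1.unique h2
  refine ⟨D, hd, fun Δ => ?_⟩
  have happ : A₀⁻¹ * Δ + D Δ * A₀ = 0 := by
    have := congrArg (fun (T : Matrix n n ℝ →L[ℝ] Matrix n n ℝ) => T Δ) hzero
    exact this
  have hmul : D Δ * A₀ = -(A₀⁻¹ * Δ) := by
    rw [eq_neg_iff_add_eq_zero, add_comm]; exact happ
  calc D Δ = D Δ * A₀ * A₀⁻¹ := by
        rw [mul_assoc, Matrix.mul_nonsing_inv A₀ ((Matrix.isUnit_iff_isUnit_det A₀).1 h), mul_one]
    _ = -(A₀⁻¹ * Δ * A₀⁻¹) := by rw [hmul, neg_mul]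

end KalmanAux

/-- If `S₀ = H·P₀·Hᵀ + R` is invertible and `K₀ = P₀·Hᵀ·S₀⁻¹`, then
`P ↦ K(P) = P·Hᵀ·(S(P))⁻¹` is Fréchet differentiable at `P₀` with derivative
`Δ ↦ (I − K₀·H)·Δ·Hᵀ·S₀⁻¹`, equivalently `Δ ↦ Δ·Hᵀ·S₀⁻¹ − P₀·Hᵀ·S₀⁻¹·H·Δ·Hᵀ·S₀⁻¹`. -/
theorem stmt_1 (n_x n_z : ℕ) (hnx : 0 < n_x) (hnz : 0 < n_z)
    (H : Matrix (Fin n_z) (Fin n_x) ℝ) (R : Matrix (Fin n_z) (Fin n_z) ℝ)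
    (P₀ : Matrix (Fin n_x) (Fin n_x) ℝ)
    (S₀ : Matrix (Fin n_z) (Fin n_z) ℝ) (hS₀ : S₀ = H * P₀ * Hᵀ + R)
    (hS : IsUnit S₀)
    (K₀ : Matrix (Fin n_x) (Fin n_z) ℝ) (hK₀ : K₀ = P₀ * Hᵀ * S₀⁻¹) :
    ∃ L : Matrix (Fin n_x) (Fin n_x) ℝ →L[ℝ] Matrix (Fin n_x) (Fin n_z) ℝ,
      HasFDerivAt
        (fun P : Matrix (Fin n_x) (Fin n_x) ℝ => P * Hᵀ * (H * P * Hᵀ + R)⁻¹) L P₀ ∧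
      (∀ Δ : Matrix (Fin n_x) (Fin n_x) ℝ,
        L Δ = (1 - K₀ * H) * Δ * Hᵀ * S₀⁻¹) ∧
      (∀ Δ : Matrix (Fin n_x) (Fin n_x) ℝ,
        L Δ = Δ * Hᵀ * S₀⁻¹ - P₀ * Hᵀ * S₀⁻¹ * H * Δ * Hᵀ * S₀⁻¹) := by
  classical
  -- the linear part of `P ↦ P * Hᵀ`
  set g₁ : Matrix (Fin n_x) (Fin n_x) ℝ →L[ℝ] Matrix (Fin n_x) (Fin n_z) ℝ :=
    LinearMap.toContinuousLinearMap
      { toFun := fun P => P * Hᵀ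
        map_add' := fun A B => Matrix.add_mul A B Hᵀ
        map_smul' := fun c A => Matrix.smul_mul c A Hᵀ } with hg₁def
  have hg₁ : HasFDerivAt (fun P : Matrix (Fin n_x) (Fin n_x) ℝ => P * Hᵀ) g₁ P₀ :=
    g₁.hasFDerivAt
  -- the linear part of `P ↦ H * P * Hᵀ`
  set sL : Matrix (Fin n_x) (Fin n_x) ℝ →L[ℝ] Matrix (Fin n_z) (Fin n_z) ℝ :=
    LinearMap.toContinuousLinearMap
      { toFun := fun P => H * P * Hᵀ
        map_add' := fun A B => by
          show H * (A + B) * Hᵀ = H * A * Hᵀ + H * B * Hᵀ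
          rw [Matrix.mul_add, Matrix.add_mul]
        map_smul' := fun c A => by
          show H * (c • A) * Hᵀ = c • (H * A * Hᵀ)
          rw [Matrix.mul_smul, Matrix.smul_mul] } with hsLdef
  have hs : HasFDerivAt
      (fun P : Matrix (Fin n_x) (Fin n_x) ℝ => H * P * Hᵀ + R) sL P₀ :=
    sL.hasFDerivAt.add_const R
  -- derivative of the inverse at S₀
  obtain ⟨D, hDdiff, hDval⟩ := KalmanAux.hasFDerivAt_inverse hS
  rw [hS₀] at hDdiff
  have hinv : HasFDerivAt
      (fun P : Matrix (Fin n_x) (Fin n_x) ℝ => (H * P * Hᵀ + R)⁻¹)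
      (D.comp sL) P₀ := hDdiff.comp P₀ hs
  -- product rule
  have hmain := KalmanAux.HasFDerivAt.matmul hg₁ hinv
  have hval : ∀ Δ, ((KalmanAux.isBoundedBilinearMap_mul.deriv
      (P₀ * Hᵀ, (H * P₀ * Hᵀ + R)⁻¹)).comp (g₁.prod (D.comp sL))) Δ
      = Δ * Hᵀ * S₀⁻¹ - P₀ * Hᵀ * S₀⁻¹ * H * Δ * Hᵀ * S₀⁻¹ := by
    intro Δ
    change P₀ * Hᵀ * (D (sL Δ)) + g₁ Δ * (H * P₀ * Hᵀ + R)⁻¹ = _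
    have h1 : sL Δ = H * Δ * Hᵀ := rfl
    have h2 : g₁ Δ = Δ * Hᵀ := rfl
    simp only [ContinuousLinearMap.comp_apply, ContinuousLinearMap.prod_apply,
      IsBoundedBilinearMap.deriv_apply, h1, h2, hDval, ← hS₀]
    simp only [Matrix.mul_neg, Matrix.mul_assoc]
    abel
  refine ⟨_, hmain, fun Δ => ?_, fun Δ => hval Δ⟩
  refine (hval Δ).trans ?_
  simp only [hK₀, Matrix.sub_mul, Matrix.one_mul, Matrix.mul_assoc]
end

section
/- Let P₀ be an n_x×n_x real matrix such that S₀ := H·P₀·Hᵀ + R is invertible, and set K₀ := P₀·Hᵀ·S₀⁻¹. Then the covariance-update map U(P) := (I − K(P)·H)·P is Fréchet differentiable at P₀, and its derivative is the linear map Δ ↦ (I − K₀·H) · Δ · (I − Hᵀ·S₀⁻¹·H·P₀). -/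
open Matrix

attribute [local instance] Matrix.normedAddCommGroup Matrix.normedSpace

section MulCLM
attribute [local instance] Matrix.normedAddCommGroup Matrix.normedSpace

variable (a b c : Type*) [Fintype a] [Fintype b] [Fintype c]

noncomputable def mulCLM : Matrix a b ℝ →L[ℝ] Matrix b c ℝ →L[ℝ] Matrix a c ℝ :=
  LinearMap.toContinuousLinearMap
    { toFun := fun A => LinearMap.toContinuousLinearMap
        { toFun := fun B => A * B
          map_add' := fun x y => Matrix.mul_add A x y
          map_smul' := fun r x => (Matrix.mul_smul A r x) }
      map_add' := fun x y => by ext B : 1; simp [Matrix.add_mul]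
      map_smul' := fun r x => by ext B : 1; simp [Matrix.smul_mul] }

@[simp] lemma mulCLM_apply (A : Matrix a b ℝ) (B : Matrix b c ℝ) :
    mulCLM a b c A B = A * B := rfl
end MulCLM

def Mx (k : ℕ) : Type := Matrix (Fin k) (Fin k) ℝ

noncomputable instance (k : ℕ) : NormedRing (Mx k) := Matrix.linftyOpNormedRing
noncomputable instance (k : ℕ) : NormedAlgebra ℝ (Mx k) := Matrix.linftyOpNormedAlgebra
instance (k : ℕ) : FiniteDimensional ℝ (Mx k) := by
  show FiniteDimensional ℝ (Matrix (Fin k) (Fin k) ℝ); infer_instance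
instance (k : ℕ) : CompleteSpace (Mx k) := FiniteDimensional.complete ℝ (Mx k)

section Main
attribute [local instance] Matrix.normedAddCommGroup Matrix.normedSpace

noncomputable def eM (k : ℕ) : Matrix (Fin k) (Fin k) ℝ ≃L[ℝ] Mx k :=
  LinearEquiv.toContinuousLinearEquiv
    { toFun := fun A => A
      invFun := fun A => A
      map_add' := fun _ _ => rfl
      map_smul' := fun _ _ => rfl
      left_inv := fun _ => rfl
      right_inv := fun _ => rfl }

theorem hasFDerivAt_matrix_inv (k : ℕ) (S₀ : Matrix (Fin k) (Fin k) ℝ) (hS : IsUnit S₀) :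
    ∃ D : Matrix (Fin k) (Fin k) ℝ →L[ℝ] Matrix (Fin k) (Fin k) ℝ,
      HasFDerivAt (fun A : Matrix (Fin k) (Fin k) ℝ => A⁻¹) D S₀ ∧
      ∀ Δ, D Δ = -(S₀⁻¹ * Δ * S₀⁻¹) := by
  have hSu : IsUnit (S₀ : Mx k) := hS
  set u : (Mx k)ˣ := hSu.unit with hu
  set e := eM k
  have h1 : HasFDerivAt (Ring.inverse : Mx k → Mx k)
      (-(ContinuousLinearMap.mulLeftRight ℝ (Mx k) ↑u⁻¹ ↑u⁻¹)) ((e : _ → Mx k) S₀) :=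
    hasFDerivAt_ringInverse u
  set L' : Mx k →L[ℝ] Mx k := -(ContinuousLinearMap.mulLeftRight ℝ (Mx k) ↑u⁻¹ ↑u⁻¹)
  have h2 : HasFDerivAt ((e.symm ∘ (Ring.inverse : Mx k → Mx k)) ∘ e)
      (((e.symm : Mx k →L[ℝ] Matrix (Fin k) (Fin k) ℝ).comp L').comp
        (e : Matrix (Fin k) (Fin k) ℝ →L[ℝ] Mx k)) S₀ := by
    exact e.comp_right_hasFDerivAt_iff.mpr (e.symm.comp_hasFDerivAt_iff.mpr h1)
  have hfun : (fun A : Matrix (Fin k) (Fin k) ℝ => A⁻¹)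
      = (e.symm ∘ (Ring.inverse : Mx k → Mx k)) ∘ e := by
    funext A
    show A⁻¹ = Ring.inverse A
    exact Matrix.nonsing_inv_eq_ringInverse A
  have hui : (↑u⁻¹ : Mx k) = (S₀⁻¹ : Matrix (Fin k) (Fin k) ℝ) := by
    show _ = S₀⁻¹
    rw [Matrix.nonsing_inv_eq_ringInverse]
    exact (Ring.inverse_unit u).symm ▸ congrArg Ring.inverse hSu.unit_spec
  refine ⟨_, hfun ▸ h2, fun Δ => ?_⟩
  show e.symm (L' (e Δ)) = _
  simp only [L', ContinuousLinearMap.neg_apply, ContinuousLinearMap.mulLeftRight_apply]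
  rw [hui]
  rfl


/-- If `S₀ = H·P₀·Hᵀ + R` is invertible and `K₀ = P₀·Hᵀ·S₀⁻¹`, then the
covariance-update map `U(P) = (I − K(P)·H)·P` is Fréchet differentiable at `P₀` with
derivative `Δ ↦ (I − K₀·H)·Δ·(I − Hᵀ·S₀⁻¹·H·P₀)`. -/
theorem stmt_2 (n_x n_z : ℕ) (hnx : 0 < n_x) (hnz : 0 < n_z)
    (H : Matrix (Fin n_z) (Fin n_x) ℝ) (R : Matrix (Fin n_z) (Fin n_z) ℝ)
    (P₀ : Matrix (Fin n_x) (Fin n_x) ℝ)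
    (S₀ : Matrix (Fin n_z) (Fin n_z) ℝ) (hS₀ : S₀ = H * P₀ * Hᵀ + R)
    (hS : IsUnit S₀)
    (K₀ : Matrix (Fin n_x) (Fin n_z) ℝ) (hK₀ : K₀ = P₀ * Hᵀ * S₀⁻¹) :
    ∃ L : Matrix (Fin n_x) (Fin n_x) ℝ →L[ℝ] Matrix (Fin n_x) (Fin n_x) ℝ,
      HasFDerivAt
        (fun P : Matrix (Fin n_x) (Fin n_x) ℝ =>
          (1 - P * Hᵀ * (H * P * Hᵀ + R)⁻¹ * H) * P) L P₀ ∧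
      ∀ Δ : Matrix (Fin n_x) (Fin n_x) ℝ,
        L Δ = (1 - K₀ * H) * Δ * (1 - Hᵀ * S₀⁻¹ * H * P₀) := by
  obtain ⟨D, hD, hDapp⟩ := hasFDerivAt_matrix_inv n_z S₀ hS
  rw [hS₀] at hD
  have hid : HasFDerivAt (fun P : Matrix (Fin n_x) (Fin n_x) ℝ => P)
      (ContinuousLinearMap.id ℝ _) P₀ := hasFDerivAt_id P₀
  -- S map
  have h1 : HasFDerivAt (fun P : Matrix (Fin n_x) (Fin n_x) ℝ => H * P) _ P₀ :=
    (mulCLM _ _ _).hasFDerivAt_of_bilinear (hasFDerivAt_const H P₀) hid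
  have h2 : HasFDerivAt (fun P : Matrix (Fin n_x) (Fin n_x) ℝ => H * P * Hᵀ) _ P₀ :=
    (mulCLM _ _ _).hasFDerivAt_of_bilinear h1 (hasFDerivAt_const Hᵀ P₀)
  have h3 : HasFDerivAt (fun P : Matrix (Fin n_x) (Fin n_x) ℝ => H * P * Hᵀ + R) _ P₀ :=
    h2.add_const R
  have hinv : HasFDerivAt (fun P : Matrix (Fin n_x) (Fin n_x) ℝ => (H * P * Hᵀ + R)⁻¹) _ P₀ :=
    hD.comp P₀ h3
  have h4 : HasFDerivAt (fun P : Matrix (Fin n_x) (Fin n_x) ℝ => P * Hᵀ) _ P₀ :=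
    (mulCLM _ _ _).hasFDerivAt_of_bilinear hid (hasFDerivAt_const Hᵀ P₀)
  have h5 : HasFDerivAt
      (fun P : Matrix (Fin n_x) (Fin n_x) ℝ => P * Hᵀ * (H * P * Hᵀ + R)⁻¹) _ P₀ :=
    (mulCLM _ _ _).hasFDerivAt_of_bilinear h4 hinv
  have h6 : HasFDerivAt
      (fun P : Matrix (Fin n_x) (Fin n_x) ℝ => P * Hᵀ * (H * P * Hᵀ + R)⁻¹ * H) _ P₀ :=
    (mulCLM _ _ _).hasFDerivAt_of_bilinear h5 (hasFDerivAt_const H P₀)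
  have h7 : HasFDerivAt
      (fun P : Matrix (Fin n_x) (Fin n_x) ℝ => 1 - P * Hᵀ * (H * P * Hᵀ + R)⁻¹ * H) _ P₀ :=
    h6.const_sub 1
  have h8 : HasFDerivAt
      (fun P : Matrix (Fin n_x) (Fin n_x) ℝ =>
        (1 - P * Hᵀ * (H * P * Hᵀ + R)⁻¹ * H) * P) _ P₀ :=
    (mulCLM _ _ _).hasFDerivAt_of_bilinear h7 hid
  refine ⟨_, h8, fun Δ => ?_⟩
  change (1 - P₀ * Hᵀ * (H * P₀ * Hᵀ + R)⁻¹ * H) * Δ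
      + (-((P₀ * Hᵀ * (H * P₀ * Hᵀ + R)⁻¹) * (0 : Matrix (Fin n_z) (Fin n_x) ℝ)
        + ((P₀ * Hᵀ) * D (H * P₀ * (0 : Matrix (Fin n_x) (Fin n_z) ℝ)
            + (H * Δ + (0 : Matrix (Fin n_z) (Fin n_x) ℝ) * P₀) * Hᵀ)
          + (P₀ * (0 : Matrix (Fin n_x) (Fin n_z) ℝ) + Δ * Hᵀ) * (H * P₀ * Hᵀ + R)⁻¹) * H)) * P₀ = _
  set_option maxHeartbeats 1000000 in
  simp only [ContinuousLinearMap.precompR, ContinuousLinearMap.precompL,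
    ContinuousLinearMap.add_apply, ContinuousLinearMap.compL_apply,
    ContinuousLinearMap.comp_apply, ContinuousLinearMap.flip_apply,
    ContinuousLinearMap.neg_apply,
    ContinuousLinearMap.zero_apply, ContinuousLinearMap.id_apply,
    mulCLM_apply, hDapp, Matrix.mul_zero, Matrix.zero_mul, zero_add, add_zero,
    Matrix.zero_apply]
  rw [← hS₀, hK₀]
  simp only [sub_eq_add_neg, Matrix.add_mul, Matrix.mul_add, Matrix.neg_mul, Matrix.mul_neg,
    Matrix.one_mul, Matrix.mul_one, Matrix.mul_assoc, neg_add, neg_neg]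
  abel
end Main
end

section
/- Let F and Q be n_x×n_x real matrices, and let P₀ be an n_x×n_x real matrix. Set P₀⁻ := F·P₀·Fᵀ + Q and suppose S₀ := H·P₀⁻·Hᵀ + R is invertible; set K₀ := P₀⁻·Hᵀ·S₀⁻¹. Then the one-step Kalman covariance recursion Φ(P) := (I − K(F·P·Fᵀ + Q)·H)·(F·P·Fᵀ + Q) is Fréchet differentiable at P₀, and its derivative is the linear map Δ ↦ (I − K₀·H) · F · Δ · Fᵀ · (I − Hᵀ·S₀⁻¹·H·P₀⁻). -/
open Matrix

attribute [local instance] Matrix.normedAddCommGroup Matrix.normedSpace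

namespace KalmanStmt3Aux

variable {l m n : Type*} [Fintype l] [Fintype m] [Fintype n]
variable {E : Type*} [NormedAddCommGroup E] [NormedSpace ℝ E]

/-- Matrix multiplication as a continuous bilinear map (sup norm, finite dimensions). -/
noncomputable def mulCLM : Matrix l m ℝ →L[ℝ] Matrix m n ℝ →L[ℝ] Matrix l n ℝ :=
  LinearMap.toContinuousLinearMap
    { toFun := fun A => LinearMap.toContinuousLinearMap
        { toFun := fun B => A * B
          map_add' := fun B C => Matrix.mul_add A B C
          map_smul' := fun c B => Matrix.mul_smul A c B }
      map_add' := fun A A' => by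
        apply ContinuousLinearMap.ext
        intro B
        simp [Matrix.add_mul]
      map_smul' := fun c A => by
        apply ContinuousLinearMap.ext
        intro B
        simp [Matrix.smul_mul] }

@[simp] theorem mulCLM_apply (A : Matrix l m ℝ) (B : Matrix m n ℝ) :
    mulCLM A B = A * B := rfl

theorem _root_.HasFDerivAt.matmul {f : E → Matrix l m ℝ} {g : E → Matrix m n ℝ}
    {f' : E →L[ℝ] Matrix l m ℝ} {g' : E →L[ℝ] Matrix m n ℝ} {x : E}
    (hf : HasFDerivAt f f' x) (hg : HasFDerivAt g g' x) :
    HasFDerivAt (fun y => f y * g y)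
      ((mulCLM (l := l) (m := m) (n := n)).precompR E (f x) g' +
        (mulCLM (l := l) (m := m) (n := n)).precompL E f' (g x)) x :=
  (mulCLM (l := l) (m := m) (n := n)).hasFDerivAt_of_bilinear hf hg

theorem differentiableAt_det [DecidableEq m] {f : E → Matrix m m ℝ} {x : E}
    (hf : ∀ i j, DifferentiableAt ℝ (fun y => f y i j) x) :
    DifferentiableAt ℝ (fun y => (f y).det) x := by
  simp only [Matrix.det_apply']
  refine DifferentiableAt.fun_sum fun σ _ => DifferentiableAt.const_mul ?_ _
  have := HasFDerivAt.finset_prod (u := Finset.univ)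
    (g := fun i y => f y (σ i) i) (g' := fun i => fderiv ℝ (fun y => f y (σ i) i) x)
    (x := x) (fun i _ => (hf (σ i) i).hasFDerivAt)
  exact this.differentiableAt

theorem differentiableAt_adjugate [DecidableEq m] {f : E → Matrix m m ℝ} {x : E}
    (hf : ∀ i j, DifferentiableAt ℝ (fun y => f y i j) x) :
    DifferentiableAt ℝ (fun y => (f y).adjugate) x := by
  refine differentiableAt_pi.mpr fun i => ?_
  refine differentiableAt_pi.mpr fun j => ?_
  simp only [Matrix.adjugate_apply]
  refine differentiableAt_det (f := fun y => (f y).updateRow j (Pi.single i 1)) ?_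
  intro k l
  by_cases hk : k = j
  · simp only [Matrix.updateRow_apply, hk, if_true]
    exact differentiableAt_const _
  · simp only [Matrix.updateRow_apply, hk, if_false]
    exact hf k l

theorem differentiableAt_matrix_inv [DecidableEq m] {f : E → Matrix m m ℝ} {x : E}
    (hf : DifferentiableAt ℝ f x) (h : IsUnit (f x)) :
    DifferentiableAt ℝ (fun y => (f y)⁻¹) x := by
  have hentry : ∀ i j, DifferentiableAt ℝ (fun y => f y i j) x := fun i j =>
    differentiableAt_pi.mp (differentiableAt_pi.mp hf i) j
  have hdet : DifferentiableAt ℝ (fun y => (f y).det) x := differentiableAt_det hentry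
  have hadj : DifferentiableAt ℝ (fun y => (f y).adjugate) x := differentiableAt_adjugate hentry
  have hdu : IsUnit (f x).det := (Matrix.isUnit_iff_isUnit_det _).mp h
  have hinv : DifferentiableAt ℝ (fun y => Ring.inverse ((f y).det)) x :=
    DifferentiableAt.comp (g := Ring.inverse) x (differentiableAt_inverse hdu) hdet
  simp only [Matrix.inv_def]
  exact hinv.smul hadj

end KalmanStmt3Aux

open KalmanStmt3Aux

/-- With `P₀⁻ = F·P₀·Fᵀ + Q` and `S₀ = H·P₀⁻·Hᵀ + R` invertible,
`K₀ = P₀⁻·Hᵀ·S₀⁻¹`, the one-step Kalman covariance recursion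
`Φ(P) = (I − K(F·P·Fᵀ + Q)·H)·(F·P·Fᵀ + Q)` is Fréchet differentiable at `P₀` with
derivative `Δ ↦ (I − K₀·H)·F·Δ·Fᵀ·(I − Hᵀ·S₀⁻¹·H·P₀⁻)`. -/
theorem stmt_3 (n_x n_z : ℕ) (hnx : 0 < n_x) (hnz : 0 < n_z)
    (H : Matrix (Fin n_z) (Fin n_x) ℝ) (R : Matrix (Fin n_z) (Fin n_z) ℝ)
    (F Q P₀ : Matrix (Fin n_x) (Fin n_x) ℝ)
    (P₀m : Matrix (Fin n_x) (Fin n_x) ℝ) (hP₀m : P₀m = F * P₀ * Fᵀ + Q)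
    (S₀ : Matrix (Fin n_z) (Fin n_z) ℝ) (hS₀ : S₀ = H * P₀m * Hᵀ + R)
    (hS : IsUnit S₀)
    (K₀ : Matrix (Fin n_x) (Fin n_z) ℝ) (hK₀ : K₀ = P₀m * Hᵀ * S₀⁻¹) :
    ∃ L : Matrix (Fin n_x) (Fin n_x) ℝ →L[ℝ] Matrix (Fin n_x) (Fin n_x) ℝ,
      HasFDerivAt
        (fun P : Matrix (Fin n_x) (Fin n_x) ℝ =>
          (1 - (F * P * Fᵀ + Q) * Hᵀ * (H * (F * P * Fᵀ + Q) * Hᵀ + R)⁻¹ * H) *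
            (F * P * Fᵀ + Q)) L P₀ ∧
      ∀ Δ : Matrix (Fin n_x) (Fin n_x) ℝ,
        L Δ = (1 - K₀ * H) * F * Δ * Fᵀ * (1 - Hᵀ * S₀⁻¹ * H * P₀m) := by
  classical
  subst hP₀m hS₀ hK₀
  -- the inner affine map and its derivative
  obtain ⟨Lg, hg, hLg⟩ :
      ∃ Lg : Matrix (Fin n_x) (Fin n_x) ℝ →L[ℝ] Matrix (Fin n_x) (Fin n_x) ℝ, HasFDerivAt (fun P : Matrix (Fin n_x) (Fin n_x) ℝ => F * P * Fᵀ + Q) Lg P₀ ∧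
        ∀ Δ, Lg Δ = F * Δ * Fᵀ := by
    refine ⟨_, (((hasFDerivAt_const F P₀).matmul (hasFDerivAt_id P₀)).matmul
      (hasFDerivAt_const Fᵀ P₀)).add_const Q, fun Δ => ?_⟩
    show F * P₀ * 0 + (F * Δ + 0 * P₀) * Fᵀ = F * Δ * Fᵀ
    simp
  -- the innovation covariance map and its derivative
  obtain ⟨LS, hSd, hLS⟩ :
      ∃ LS : Matrix (Fin n_x) (Fin n_x) ℝ →L[ℝ] Matrix (Fin n_z) (Fin n_z) ℝ,
        HasFDerivAt (fun P : Matrix (Fin n_x) (Fin n_x) ℝ => H * (F * P * Fᵀ + Q) * Hᵀ + R) LS P₀ ∧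
        ∀ Δ, LS Δ = H * (F * Δ * Fᵀ) * Hᵀ := by
    refine ⟨_, (((hasFDerivAt_const H P₀).matmul hg).matmul
      (hasFDerivAt_const Hᵀ P₀)).add_const R, fun Δ => ?_⟩
    show H * (F * P₀ * Fᵀ + Q) * (0 : Matrix (Fin n_x) (Fin n_z) ℝ) +
      (H * Lg Δ + (0 : Matrix (Fin n_z) (Fin n_x) ℝ) * (F * P₀ * Fᵀ + Q)) * Hᵀ = _
    simp [hLg]
  set S₀ : Matrix (Fin n_z) (Fin n_z) ℝ := H * (F * P₀ * Fᵀ + Q) * Hᵀ + R with hS₀def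
  have hdetu : IsUnit S₀.det := (Matrix.isUnit_iff_isUnit_det _).mp hS
  -- differentiability of the inverse of the innovation covariance
  have hinv : DifferentiableAt ℝ (fun P : Matrix (Fin n_x) (Fin n_x) ℝ => (H * (F * P * Fᵀ + Q) * Hᵀ + R)⁻¹) P₀ :=
    differentiableAt_matrix_inv hSd.differentiableAt hS
  set dInv := fderiv ℝ (fun P : Matrix (Fin n_x) (Fin n_x) ℝ => (H * (F * P * Fᵀ + Q) * Hᵀ + R)⁻¹) P₀ with hdInvdef
  have hdInv : HasFDerivAt (fun P : Matrix (Fin n_x) (Fin n_x) ℝ => (H * (F * P * Fᵀ + Q) * Hᵀ + R)⁻¹) dInv P₀ :=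
    hinv.hasFDerivAt
  -- eventually the innovation covariance is invertible
  have hdet : DifferentiableAt ℝ (fun P : Matrix (Fin n_x) (Fin n_x) ℝ => (H * (F * P * Fᵀ + Q) * Hᵀ + R).det) P₀ :=
    differentiableAt_det fun i j =>
      differentiableAt_pi.mp (differentiableAt_pi.mp hSd.differentiableAt i) j
  have hne : (H * (F * P₀ * Fᵀ + Q) * Hᵀ + R).det ≠ 0 := by
    simpa [isUnit_iff_ne_zero] using hdetu
  have hev : (fun P : Matrix (Fin n_x) (Fin n_x) ℝ => (H * (F * P * Fᵀ + Q) * Hᵀ + R) *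
      (H * (F * P * Fᵀ + Q) * Hᵀ + R)⁻¹) =ᶠ[nhds P₀] fun _ => (1 : Matrix (Fin n_z) (Fin n_z) ℝ) := by
    filter_upwards [hdet.continuousAt.eventually_ne hne] with P hP
    exact Matrix.mul_nonsing_inv _ (isUnit_iff_ne_zero.mpr hP)
  -- derivative of the inverse via the product rule
  have hprod := hSd.matmul hdInv
  have hone : HasFDerivAt (fun P : Matrix (Fin n_x) (Fin n_x) ℝ => (H * (F * P * Fᵀ + Q) * Hᵀ + R) *
      (H * (F * P * Fᵀ + Q) * Hᵀ + R)⁻¹) (0 : Matrix (Fin n_x) (Fin n_x) ℝ →L[ℝ] Matrix (Fin n_z) (Fin n_z) ℝ) P₀ :=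
    (hasFDerivAt_const (1 : Matrix (Fin n_z) (Fin n_z) ℝ) P₀).congr_of_eventuallyEq hev
  have hzero := hprod.unique hone
  have hdInv_eq : ∀ Δ : Matrix (Fin n_x) (Fin n_x) ℝ, dInv Δ = -(S₀⁻¹ * (H * (F * Δ * Fᵀ) * Hᵀ) * S₀⁻¹) := by
    intro Δ
    have h0 := congrArg (fun T : Matrix (Fin n_x) (Fin n_x) ℝ →L[ℝ] Matrix (Fin n_z) (Fin n_z) ℝ => T Δ) hzero
    simp only [ContinuousLinearMap.add_apply, ContinuousLinearMap.sub_apply, ContinuousLinearMap.zero_apply, ContinuousLinearMap.precompR_apply, ContinuousLinearMap.precompL_apply, ContinuousLinearMap.compL_apply, ContinuousLinearMap.comp_apply, ContinuousLinearMap.flip_apply, ContinuousLinearMap.id_apply, mulCLM_apply, Matrix.mul_zero, Matrix.zero_mul, add_zero, zero_add] at h0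
    -- h0 : S₀ * dInv Δ + LS Δ * S₀⁻¹ = 0
    have h1 : S₀ * dInv Δ = -(LS Δ * S₀⁻¹) := eq_neg_of_add_eq_zero_left h0
    calc dInv Δ = (S₀⁻¹ * S₀) * dInv Δ := by rw [Matrix.nonsing_inv_mul _ hdetu, Matrix.one_mul]
      _ = S₀⁻¹ * (S₀ * dInv Δ) := by rw [Matrix.mul_assoc]
      _ = -(S₀⁻¹ * (LS Δ * S₀⁻¹)) := by rw [h1, Matrix.mul_neg]
      _ = -(S₀⁻¹ * (H * (F * Δ * Fᵀ) * Hᵀ) * S₀⁻¹) := by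
          rw [hLS]; simp only [Matrix.mul_assoc]
  -- assemble the derivative of the full recursion
  have h1 := hg.matmul (hasFDerivAt_const Hᵀ P₀)
  have h2 := h1.matmul hdInv
  have h3 := h2.matmul (hasFDerivAt_const H P₀)
  have h4 := (hasFDerivAt_const (1 : Matrix (Fin n_x) (Fin n_x) ℝ) P₀).sub h3
  have h5 := h4.matmul hg
  refine ⟨_, h5, fun Δ => ?_⟩
  change (1 - (F * P₀ * Fᵀ + Q) * Hᵀ * S₀⁻¹ * H) * Lg Δ +
      ((0 : Matrix (Fin n_x) (Fin n_x) ℝ) - ((F * P₀ * Fᵀ + Q) * Hᵀ * S₀⁻¹ * (0 : Matrix (Fin n_z) (Fin n_x) ℝ) +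
        ((F * P₀ * Fᵀ + Q) * Hᵀ * dInv Δ + ((F * P₀ * Fᵀ + Q) * (0 : Matrix (Fin n_x) (Fin n_z) ℝ) +
          Lg Δ * Hᵀ) * S₀⁻¹) * H)) * (F * P₀ * Fᵀ + Q) = _
  simp only [ContinuousLinearMap.add_apply, ContinuousLinearMap.sub_apply, ContinuousLinearMap.zero_apply, ContinuousLinearMap.precompR_apply, ContinuousLinearMap.precompL_apply, ContinuousLinearMap.compL_apply, ContinuousLinearMap.comp_apply, ContinuousLinearMap.flip_apply, ContinuousLinearMap.id_apply, mulCLM_apply, Matrix.mul_zero, Matrix.zero_mul, add_zero, zero_add, hLg, hdInv_eq, ← hS₀def]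
  generalize hT : S₀⁻¹ = T
  generalize F * P₀ * Fᵀ + Q = M
  generalize hD : F * Δ * Fᵀ = D
  rw [Matrix.mul_assoc _ F Δ, Matrix.mul_assoc _ (F * Δ) Fᵀ, hD]
  simp only [Matrix.mul_add, Matrix.add_mul, Matrix.mul_sub, Matrix.sub_mul, Matrix.mul_assoc,
    Matrix.mul_one, Matrix.one_mul, Matrix.mul_zero, Matrix.zero_mul, Matrix.mul_neg,
    Matrix.neg_mul, zero_sub, add_zero, zero_add, neg_neg, sub_eq_add_neg, neg_add]
  abel
end

section
/- Let μ ∈ ℝ^{n_x} and z ∈ ℝ^{n_z} be fixed vectors, and let P₀ be an n_x×n_x real matrix such that S₀ := H·P₀·Hᵀ + R is invertible; set K₀ := P₀·Hᵀ·S₀⁻¹. Then the posterior-mean map P ↦ μ + K(P) ·ᵥ (z − H ·ᵥ μ), from n_x×n_x real matrices to ℝ^{n_x}, is Fréchet differentiable at P₀, and its derivative is the linear map Δ ↦ ((I − K₀·H) · Δ · Hᵀ · S₀⁻¹) ·ᵥ (z − H ·ᵥ μ). -/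
open Matrix

lemma linfty_le_sup {m n : ℕ} (A : Matrix (Fin m) (Fin n) ℝ) :
    @norm _ (Matrix.linftyOpNormedAddCommGroup :
        NormedAddCommGroup (Matrix (Fin m) (Fin n) ℝ)).toNorm A ≤
      ((n : ℝ) + 1) * @norm _ (Matrix.normedAddCommGroup :
        NormedAddCommGroup (Matrix (Fin m) (Fin n) ℝ)).toNorm A := by
  have e1 : @norm _ (Matrix.linftyOpNormedAddCommGroup :
      NormedAddCommGroup (Matrix (Fin m) (Fin n) ℝ)).toNorm A
      = (((Finset.univ : Finset (Fin m)).sup fun i => ∑ j, ‖A i j‖₊ : NNReal) : ℝ) :=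
    Matrix.linfty_opNorm_def A
  have e2 : @norm _ (Matrix.normedAddCommGroup :
      NormedAddCommGroup (Matrix (Fin m) (Fin n) ℝ)).toNorm A
      = (((Finset.univ : Finset (Fin m)).sup fun i =>
          (Finset.univ : Finset (Fin n)).sup fun j => ‖A i j‖₊ : NNReal) : ℝ) := by
    have := Matrix.norm_eq_sup_sup_nnnorm A
    exact this
  rw [e1, e2]
  have key : ((Finset.univ : Finset (Fin m)).sup fun i => ∑ j, ‖A i j‖₊)
      ≤ (n : NNReal) * ((Finset.univ : Finset (Fin m)).sup fun i =>
          (Finset.univ : Finset (Fin n)).sup fun j => ‖A i j‖₊) := by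
    refine Finset.sup_le fun i _ => ?_
    calc ∑ j, ‖A i j‖₊
        ≤ ∑ _j : Fin n, ((Finset.univ : Finset (Fin m)).sup fun i =>
            (Finset.univ : Finset (Fin n)).sup fun j => ‖A i j‖₊) := by
          refine Finset.sum_le_sum fun j _ => ?_
          exact le_trans (Finset.le_sup (f := fun j => ‖A i j‖₊) (Finset.mem_univ j))
            (Finset.le_sup (f := fun i => (Finset.univ : Finset (Fin n)).sup
              fun j => ‖A i j‖₊) (Finset.mem_univ i))
      _ = (n : NNReal) * _ := by simp [mul_comm]
  calc (((Finset.univ : Finset (Fin m)).sup fun i => ∑ j, ‖A i j‖₊ : NNReal) : ℝ)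
      ≤ (((n : NNReal) * ((Finset.univ : Finset (Fin m)).sup fun i =>
          (Finset.univ : Finset (Fin n)).sup fun j => ‖A i j‖₊) : NNReal) : ℝ) := by
        exact_mod_cast key
    _ = (n : ℝ) * (((Finset.univ : Finset (Fin m)).sup fun i =>
          (Finset.univ : Finset (Fin n)).sup fun j => ‖A i j‖₊ : NNReal) : ℝ) := by
        push_cast; ring
    _ ≤ ((n : ℝ) + 1) * _ := by
        refine mul_le_mul_of_nonneg_right (by norm_num) ?_
        positivity

section SupWorld
attribute [local instance] Matrix.normedAddCommGroup Matrix.normedSpace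

theorem transfer_fderiv {m n : ℕ} {F : Type*} [NormedAddCommGroup F] [NormedSpace ℝ F]
    {f : Matrix (Fin m) (Fin n) ℝ → F} {L : Matrix (Fin m) (Fin n) ℝ →L[ℝ] F}
    {x : Matrix (Fin m) (Fin n) ℝ}
    (h : @HasFDerivAt ℝ _ _ _ _
      (Matrix.linftyOpNormedAddCommGroup : NormedAddCommGroup (Matrix (Fin m) (Fin n) ℝ)).toUniformSpace.toTopologicalSpace
      F _ _ _ f L x) :
    HasFDerivAt f L x := by
  have h1 := (@hasFDerivAt_iff_isLittleO_nhds_zero ℝ _ _ Matrix.linftyOpNormedAddCommGroup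
    Matrix.linftyOpNormedSpace F _ _ f L x).1 h
  have h2 := (@Asymptotics.isLittleO_iff _ _ _ _
    (Matrix.linftyOpNormedAddCommGroup :
      NormedAddCommGroup (Matrix (Fin m) (Fin n) ℝ)).toNorm _ _ _).1 h1
  refine hasFDerivAt_iff_isLittleO_nhds_zero.2 ?_; rw [Asymptotics.isLittleO_iff]
  intro c hc
  have hn1 : (0:ℝ) < (n:ℝ) + 1 := by positivity
  have hc' : 0 < c / ((n:ℝ)+1) := by positivity
  have h3 := h2 hc'
  rw [Filter.eventually_iff_exists_mem] at h3 ⊢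
  obtain ⟨s, hs, hys⟩ := h3
  refine ⟨s, hs, fun y hy => ?_⟩
  refine (hys y hy).trans ?_
  have hle : @norm _ (Matrix.linftyOpNormedAddCommGroup :
        NormedAddCommGroup (Matrix (Fin m) (Fin n) ℝ)).toNorm y ≤ ((n:ℝ)+1) * ‖y‖ :=
    linfty_le_sup y
  have h4 := mul_le_mul_of_nonneg_left hle hc'.le
  refine h4.trans (le_of_eq ?_)
  field_simp

end SupWorld

section LinftyWorld
attribute [local instance] Matrix.linftyOpNormedAddCommGroup Matrix.linftyOpNormedSpace
  Matrix.linftyOpNormedRing Matrix.linftyOpNormedAlgebra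

theorem aux_deriv (n_x n_z : ℕ)
    (H : Matrix (Fin n_z) (Fin n_x) ℝ) (R : Matrix (Fin n_z) (Fin n_z) ℝ)
    (μ : Fin n_x → ℝ) (z : Fin n_z → ℝ)
    (P₀ : Matrix (Fin n_x) (Fin n_x) ℝ)
    (S₀ : Matrix (Fin n_z) (Fin n_z) ℝ) (hS₀ : S₀ = H * P₀ * Hᵀ + R)
    (hS : IsUnit S₀)
    (K₀ : Matrix (Fin n_x) (Fin n_z) ℝ) (hK₀ : K₀ = P₀ * Hᵀ * S₀⁻¹) :
    ∃ L : Matrix (Fin n_x) (Fin n_x) ℝ →L[ℝ] (Fin n_x → ℝ),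
      HasFDerivAt
        (fun P : Matrix (Fin n_x) (Fin n_x) ℝ =>
          μ + (P * Hᵀ * (H * P * Hᵀ + R)⁻¹).mulVec (z - H.mulVec μ)) L P₀ ∧
      ∀ Δ : Matrix (Fin n_x) (Fin n_x) ℝ,
        L Δ = ((1 - K₀ * H) * Δ * Hᵀ * S₀⁻¹).mulVec (z - H.mulVec μ) := by
  set v : Fin n_z → ℝ := z - H.mulVec μ with hv
  -- the sandwich linear map Δ ↦ H * Δ * Hᵀ
  set sl : Matrix (Fin n_x) (Fin n_x) ℝ →ₗ[ℝ] Matrix (Fin n_z) (Fin n_z) ℝ :=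
    { toFun := fun Δ => H * Δ * Hᵀ
      map_add' := fun a b => by rw [Matrix.mul_add, Matrix.add_mul]
      map_smul' := fun c a => by simp [Matrix.mul_smul, Matrix.smul_mul] } with hsl
  have hSP : HasFDerivAt (fun P : Matrix (Fin n_x) (Fin n_x) ℝ => H * P * Hᵀ + R)
      sl.toContinuousLinearMap P₀ :=
    sl.toContinuousLinearMap.hasFDerivAt.add_const R
  -- inverse step
  have hu : (hS.unit : Matrix (Fin n_z) (Fin n_z) ℝ) = H * P₀ * Hᵀ + R := by
    rw [hS.unit_spec, hS₀]
  have huinv : ((hS.unit⁻¹ : (Matrix (Fin n_z) (Fin n_z) ℝ)ˣ) :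
      Matrix (Fin n_z) (Fin n_z) ℝ) = S₀⁻¹ := by
    have h := Ring.inverse_unit hS.unit
    rw [hS.unit_spec] at h
    rw [Matrix.nonsing_inv_eq_ringInverse]
    exact h.symm
  have hinv0 := hasFDerivAt_ringInverse (𝕜 := ℝ) hS.unit
  rw [hu] at hinv0
  have hinv := hinv0.comp P₀ hSP
  have hinv' : HasFDerivAt
      (fun P : Matrix (Fin n_x) (Fin n_x) ℝ => (H * P * Hᵀ + R)⁻¹)
      ((-(ContinuousLinearMap.mulLeftRight ℝ _ ↑hS.unit⁻¹ ↑hS.unit⁻¹)).comp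
        sl.toContinuousLinearMap) P₀ := by
    have : (fun P : Matrix (Fin n_x) (Fin n_x) ℝ => (H * P * Hᵀ + R)⁻¹) =
        fun P => Ring.inverse (H * P * Hᵀ + R) := by
      funext P; exact Matrix.nonsing_inv_eq_ringInverse _
    rw [this]
    exact hinv
  -- apply  `.mulVec v`
  set mv : Matrix (Fin n_z) (Fin n_z) ℝ →ₗ[ℝ] (Fin n_z → ℝ) :=
    { toFun := fun A => A.mulVec v
      map_add' := fun a b => Matrix.add_mulVec a b v
      map_smul' := fun c a => Matrix.smul_mulVec c a v } with hmv
  have hy1 := mv.toContinuousLinearMap.hasFDerivAt.comp P₀ hinv'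
  -- apply `Hᵀ.mulVec`
  have hy := (Matrix.mulVecLin Hᵀ).toContinuousLinearMap.hasFDerivAt.comp P₀ hy1
  -- bilinear part
  set Bl : Matrix (Fin n_x) (Fin n_x) ℝ →ₗ[ℝ] ((Fin n_x → ℝ) →L[ℝ] (Fin n_x → ℝ)) :=
    { toFun := fun P => (Matrix.mulVecLin P).toContinuousLinearMap
      map_add' := fun a b => by
        ext w
        simp [Matrix.add_mulVec]
      map_smul' := fun c a => by
        ext w
        simp [Matrix.smul_mulVec] } with hBl
  set B := Bl.toContinuousLinearMap with hB
  have hbil := B.isBoundedBilinearMap.hasFDerivAt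
    (P₀, Hᵀ.mulVec (((H * P₀ * Hᵀ + R)⁻¹).mulVec v))
  have hpair := (hasFDerivAt_id P₀).prodMk hy
  have hcomp := hbil.comp P₀ hpair
  have hfinal := hcomp.const_add μ
  refine ⟨_, hfinal.congr_of_eventuallyEq (Filter.Eventually.of_forall fun P => ?_),
    fun Δ => ?_⟩
  · show μ + (P * Hᵀ * (H * P * Hᵀ + R)⁻¹) *ᵥ v
        = μ + B P (Hᵀ.mulVec (((H * P * Hᵀ + R)⁻¹).mulVec v))
    congr 1
    rw [Matrix.mul_assoc]
    simp [hB, hBl, Matrix.mulVec_mulVec]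
  · simp only [ContinuousLinearMap.coe_comp', Function.comp_apply,
      ContinuousLinearMap.prod_apply, ContinuousLinearMap.coe_id', id_eq,
      IsBoundedBilinearMap.deriv_apply, ContinuousLinearMap.neg_apply,
      ContinuousLinearMap.mulLeftRight_apply, LinearMap.coe_toContinuousLinearMap',
      hB, hBl, hmv, hsl, LinearMap.coe_mk, AddHom.coe_mk, Matrix.mulVecLin_apply, huinv]
    change P₀ *ᵥ (Hᵀ *ᵥ (-(S₀⁻¹ * (H * Δ * Hᵀ) * S₀⁻¹)) *ᵥ v) + Δ *ᵥ (Hᵀ *ᵥ (H * P₀ * Hᵀ + R)⁻¹ *ᵥ v)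
      = ((1 - K₀ * H) * Δ * Hᵀ * S₀⁻¹) *ᵥ v
    rw [← hS₀, hK₀]
    simp only [Matrix.mulVec_mulVec]
    rw [← Matrix.add_mulVec]
    simp only [Matrix.sub_mul, Matrix.one_mul, Matrix.mul_neg, Matrix.neg_mul,
      Matrix.mul_assoc]
    abel
end LinftyWorld

attribute [local instance] Matrix.normedAddCommGroup Matrix.normedSpace

/-- With fixed `μ`, `z`, and `S₀ = H·P₀·Hᵀ + R` invertible,
`K₀ = P₀·Hᵀ·S₀⁻¹`, the posterior-mean map `P ↦ μ + K(P) ·ᵥ (z − H ·ᵥ μ)` is Fréchet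
differentiable at `P₀` with derivative
`Δ ↦ ((I − K₀·H)·Δ·Hᵀ·S₀⁻¹) ·ᵥ (z − H ·ᵥ μ)`. -/
theorem stmt_4 (n_x n_z : ℕ) (hnx : 0 < n_x) (hnz : 0 < n_z)
    (H : Matrix (Fin n_z) (Fin n_x) ℝ) (R : Matrix (Fin n_z) (Fin n_z) ℝ)
    (μ : Fin n_x → ℝ) (z : Fin n_z → ℝ)
    (P₀ : Matrix (Fin n_x) (Fin n_x) ℝ)
    (S₀ : Matrix (Fin n_z) (Fin n_z) ℝ) (hS₀ : S₀ = H * P₀ * Hᵀ + R)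
    (hS : IsUnit S₀)
    (K₀ : Matrix (Fin n_x) (Fin n_z) ℝ) (hK₀ : K₀ = P₀ * Hᵀ * S₀⁻¹) :
    ∃ L : Matrix (Fin n_x) (Fin n_x) ℝ →L[ℝ] (Fin n_x → ℝ),
      HasFDerivAt
        (fun P : Matrix (Fin n_x) (Fin n_x) ℝ =>
          μ + (P * Hᵀ * (H * P * Hᵀ + R)⁻¹).mulVec (z - H.mulVec μ)) L P₀ ∧
      ∀ Δ : Matrix (Fin n_x) (Fin n_x) ℝ,
        L Δ = ((1 - K₀ * H) * Δ * Hᵀ * S₀⁻¹).mulVec (z - H.mulVec μ) := by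
  obtain ⟨L, hL, hform⟩ := aux_deriv n_x n_z H R μ z P₀ S₀ hS₀ hS K₀ hK₀
  exact ⟨L, transfer_fderiv hL, hform⟩
end

section
/- Let F and Q be n_x×n_x real matrices, let μ ∈ ℝ^{n_x} and z ∈ ℝ^{n_z} be fixed vectors, and let P₀ be an n_x×n_x real matrix. Set P₀⁻ := F·P₀·Fᵀ + Q and suppose S₀ := H·P₀⁻·Hᵀ + R is invertible; set K₀ := P₀⁻·Hᵀ·S₀⁻¹. Then the map P ↦ μ + K(F·P·Fᵀ + Q) ·ᵥ (z − H ·ᵥ μ), from n_x×n_x real matrices to ℝ^{n_x}, is Fréchet differentiable at P₀, and its derivative is the linear map Δ ↦ ((I − K₀·H) · F · Δ · Fᵀ · Hᵀ · S₀⁻¹) ·ᵥ (z − H ·ᵥ μ). -/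
open Matrix

attribute [local instance] Matrix.normedAddCommGroup Matrix.normedSpace

variable {m n p : ℕ}

noncomputable def entryCLM (i : Fin m) (j : Fin n) : Matrix (Fin m) (Fin n) ℝ →L[ℝ] ℝ :=
  LinearMap.toContinuousLinearMap
    { toFun := fun M => M i j
      map_add' := fun _ _ => rfl
      map_smul' := fun _ _ => rfl }

lemma differentiable_det : Differentiable ℝ (fun M : Matrix (Fin m) (Fin m) ℝ => M.det) := by
  simp only [Matrix.det_apply']
  apply Differentiable.fun_sum
  intro σ _
  apply Differentiable.const_mul
  intro M
  exact (HasFDerivAt.finset_prod (u := Finset.univ)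
    (g := fun i N => N (σ i) i) (g' := fun i => entryCLM (σ i) i)
    (fun i _ => (entryCLM (σ i) i).hasFDerivAt)).differentiableAt

lemma differentiable_matrix_of_entries {E : Type*} [NormedAddCommGroup E] [NormedSpace ℝ E]
    {f : E → Matrix (Fin m) (Fin n) ℝ}
    (h : ∀ i j, Differentiable ℝ (fun x => f x i j)) : Differentiable ℝ f := by
  apply differentiable_pi.mpr
  intro i
  exact differentiable_pi.mpr (h i)

lemma differentiable_adjugate :
    Differentiable ℝ (fun M : Matrix (Fin m) (Fin m) ℝ => M.adjugate) := by
  apply differentiable_matrix_of_entries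
  intro i j
  simp only [Matrix.adjugate_apply]
  have : (fun M : Matrix (Fin m) (Fin m) ℝ => (M.updateRow j (Pi.single i 1)).det)
      = (fun N : Matrix (Fin m) (Fin m) ℝ => N.det) ∘
        (fun M => M.updateRow j (Pi.single i 1)) := rfl
  rw [this]
  apply differentiable_det.comp
  apply differentiable_matrix_of_entries
  intro a b
  by_cases hab : a = j
  · subst hab; simp [Matrix.updateRow_apply]
  · simp only [Matrix.updateRow_apply, if_neg hab]
    exact (entryCLM a b).differentiable

lemma differentiableAt_matrix_inv {S : Matrix (Fin m) (Fin m) ℝ} (hS : IsUnit S) :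
    DifferentiableAt ℝ (fun M : Matrix (Fin m) (Fin m) ℝ => M⁻¹) S := by
  have hdet : S.det ≠ 0 := by
    have := (Matrix.isUnit_iff_isUnit_det S).mp hS
    exact this.ne_zero
  have heq : (fun M : Matrix (Fin m) (Fin m) ℝ => M⁻¹)
      = fun M => (M.det)⁻¹ • M.adjugate := by
    funext M
    rw [Matrix.inv_def, Ring.inverse_eq_inv']
  rw [heq]
  exact ((differentiable_det.differentiableAt).inv hdet).smul
    (differentiable_adjugate.differentiableAt)

-- multiplication as a continuous bilinear map
noncomputable def mulB : Matrix (Fin m) (Fin n) ℝ →L[ℝ]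
    Matrix (Fin n) (Fin p) ℝ →L[ℝ] Matrix (Fin m) (Fin p) ℝ :=
  LinearMap.toContinuousLinearMap
    { toFun := fun A => LinearMap.toContinuousLinearMap
        { toFun := fun B => A * B
          map_add' := fun _ _ => Matrix.mul_add A _ _
          map_smul' := fun r B => (Matrix.mul_smul A r B) }
      map_add' := fun A A' => by
        refine ContinuousLinearMap.ext fun B => ?_
        simp only [ContinuousLinearMap.add_apply]
        exact Matrix.add_mul A A' B
      map_smul' := fun r A => by
        refine ContinuousLinearMap.ext fun B => ?_
        simp only [RingHom.id_apply, ContinuousLinearMap.smul_apply]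
        exact Matrix.smul_mul r A B }

@[simp] lemma mulB_apply (A : Matrix (Fin m) (Fin n) ℝ) (B : Matrix (Fin n) (Fin p) ℝ) :
    mulB A B = A * B := rfl

noncomputable def sandwichCLM (B : Matrix (Fin m) (Fin n) ℝ) (C : Matrix (Fin n) (Fin p) ℝ) :
    Matrix (Fin n) (Fin n) ℝ →L[ℝ] Matrix (Fin m) (Fin p) ℝ :=
  LinearMap.toContinuousLinearMap
    { toFun := fun M => B * M * C
      map_add' := fun M N => by rw [Matrix.mul_add, Matrix.add_mul]
      map_smul' := fun r M => by
        simp only [RingHom.id_apply]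
        rw [Matrix.mul_smul, Matrix.smul_mul] }

@[simp] lemma sandwichCLM_apply (B : Matrix (Fin m) (Fin n) ℝ) (C : Matrix (Fin n) (Fin p) ℝ)
    (M : Matrix (Fin n) (Fin n) ℝ) : sandwichCLM B C M = B * M * C := rfl

lemma hasFDerivAt_matrix_inv_s5 {S : Matrix (Fin m) (Fin m) ℝ} (hS : IsUnit S) :
    HasFDerivAt (fun M : Matrix (Fin m) (Fin m) ℝ => M⁻¹)
      (-(sandwichCLM S⁻¹ S⁻¹)) S := by
  have hdetu : IsUnit S.det := (Matrix.isUnit_iff_isUnit_det S).mp hS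
  have hdet : S.det ≠ 0 := hdetu.ne_zero
  have hdiff := differentiableAt_matrix_inv hS
  set L := fderiv ℝ (fun M : Matrix (Fin m) (Fin m) ℝ => M⁻¹) S with hLdef
  have hL : HasFDerivAt (fun M : Matrix (Fin m) (Fin m) ℝ => M⁻¹) L S := hdiff.hasFDerivAt
  -- product rule for M ↦ M * M⁻¹
  have hprod : HasFDerivAt (fun M : Matrix (Fin m) (Fin m) ℝ => mulB M M⁻¹)
      ((mulB (m := m) (n := m) (p := m)).precompR _ S L +
        (mulB (m := m) (n := m) (p := m)).precompL _ (ContinuousLinearMap.id ℝ _) S⁻¹) S :=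
    ContinuousLinearMap.hasFDerivAt_of_bilinear _ (hasFDerivAt_id S) hL
  -- M * M⁻¹ = 1 near S
  have hev : (fun M : Matrix (Fin m) (Fin m) ℝ => mulB M M⁻¹) =ᶠ[nhds S] fun _ => 1 := by
    have hopen : IsOpen {M : Matrix (Fin m) (Fin m) ℝ | M.det ≠ 0} :=
      isOpen_compl_singleton.preimage differentiable_det.continuous
    filter_upwards [hopen.mem_nhds hdet] with M hM
    simp only [mulB_apply]
    exact Matrix.mul_nonsing_inv M (isUnit_iff_ne_zero.mpr hM)
  have hzero : HasFDerivAt (fun _ : Matrix (Fin m) (Fin m) ℝ => (1 : Matrix (Fin m) (Fin m) ℝ))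
      ((mulB (m := m) (n := m) (p := m)).precompR _ S L +
        (mulB (m := m) (n := m) (p := m)).precompL _ (ContinuousLinearMap.id ℝ _) S⁻¹) S :=
    hprod.congr_of_eventuallyEq hev.symm
  have hder0 := hzero.unique (hasFDerivAt_const 1 S)
  -- evaluate at Δ
  have key : ∀ Δ : Matrix (Fin m) (Fin m) ℝ, S * L Δ + Δ * S⁻¹ = 0 := by
    intro Δ
    have := DFunLike.congr_fun hder0 Δ
    exact this
  have hLeq : L = -(sandwichCLM S⁻¹ S⁻¹) := by
    refine ContinuousLinearMap.ext fun Δ => ?_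
    have h1 : S * L Δ = -(Δ * S⁻¹) := by
      have := key Δ; linear_combination (norm := noncomm_ring) this
    have h2 : S⁻¹ * (S * L Δ) = L Δ := by
      rw [← Matrix.mul_assoc, Matrix.nonsing_inv_mul S hdetu, Matrix.one_mul]
    rw [h1] at h2
    simp only [ContinuousLinearMap.neg_apply, sandwichCLM_apply]
    rw [← h2]
    noncomm_ring
  rw [← hLeq]
  exact hL

noncomputable def mulVecCLM (c : Fin n → ℝ) : Matrix (Fin m) (Fin n) ℝ →L[ℝ] (Fin m → ℝ) :=
  LinearMap.toContinuousLinearMap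
    { toFun := fun M => M.mulVec c
      map_add' := fun M N => Matrix.add_mulVec M N c
      map_smul' := fun r M => Matrix.smul_mulVec r M c }

@[simp] lemma mulVecCLM_apply (c : Fin n → ℝ) (M : Matrix (Fin m) (Fin n) ℝ) :
    mulVecCLM c M = M.mulVec c := rfl


/-- With fixed `μ`, `z`, `P₀⁻ = F·P₀·Fᵀ + Q`, `S₀ = H·P₀⁻·Hᵀ + R`
invertible and `K₀ = P₀⁻·Hᵀ·S₀⁻¹`, the map `P ↦ μ + K(F·P·Fᵀ + Q) ·ᵥ (z − H ·ᵥ μ)`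
is Fréchet differentiable at `P₀` with derivative
`Δ ↦ ((I − K₀·H)·F·Δ·Fᵀ·Hᵀ·S₀⁻¹) ·ᵥ (z − H ·ᵥ μ)`. -/
theorem stmt_5 (n_x n_z : ℕ) (hnx : 0 < n_x) (hnz : 0 < n_z)
    (H : Matrix (Fin n_z) (Fin n_x) ℝ) (R : Matrix (Fin n_z) (Fin n_z) ℝ)
    (F Q : Matrix (Fin n_x) (Fin n_x) ℝ)
    (μ : Fin n_x → ℝ) (z : Fin n_z → ℝ)
    (P₀ : Matrix (Fin n_x) (Fin n_x) ℝ)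
    (P₀m : Matrix (Fin n_x) (Fin n_x) ℝ) (hP₀m : P₀m = F * P₀ * Fᵀ + Q)
    (S₀ : Matrix (Fin n_z) (Fin n_z) ℝ) (hS₀ : S₀ = H * P₀m * Hᵀ + R)
    (hS : IsUnit S₀)
    (K₀ : Matrix (Fin n_x) (Fin n_z) ℝ) (hK₀ : K₀ = P₀m * Hᵀ * S₀⁻¹) :
    ∃ L : Matrix (Fin n_x) (Fin n_x) ℝ →L[ℝ] (Fin n_x → ℝ),
      HasFDerivAt
        (fun P : Matrix (Fin n_x) (Fin n_x) ℝ =>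
          μ + ((F * P * Fᵀ + Q) * Hᵀ *
            (H * (F * P * Fᵀ + Q) * Hᵀ + R)⁻¹).mulVec (z - H.mulVec μ)) L P₀ ∧
      ∀ Δ : Matrix (Fin n_x) (Fin n_x) ℝ,
        L Δ = ((1 - K₀ * H) * F * Δ * Fᵀ * Hᵀ * S₀⁻¹).mulVec (z - H.mulVec μ) := by
  set c := z - H.mulVec μ with hc
  -- derivative of U : P ↦ (F*P*Fᵀ+Q)*Hᵀ
  have hU : HasFDerivAt (fun P : Matrix (Fin n_x) (Fin n_x) ℝ => (F * P * Fᵀ + Q) * Hᵀ)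
      (sandwichCLM F (Fᵀ * Hᵀ)) P₀ := by
    have h1 : HasFDerivAt
        (fun P : Matrix (Fin n_x) (Fin n_x) ℝ => sandwichCLM F (Fᵀ * Hᵀ) P + Q * Hᵀ)
        (sandwichCLM F (Fᵀ * Hᵀ)) P₀ :=
      ((sandwichCLM F (Fᵀ * Hᵀ)).hasFDerivAt).add_const (Q * Hᵀ)
    have heq : (fun P : Matrix (Fin n_x) (Fin n_x) ℝ => (F * P * Fᵀ + Q) * Hᵀ)
        = (fun P => sandwichCLM F (Fᵀ * Hᵀ) P + Q * Hᵀ) := by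
      funext P; simp only [sandwichCLM_apply]; simp [Matrix.add_mul, Matrix.mul_assoc]
    rw [heq]; exact h1
  -- derivative of Sfun : P ↦ H*(F*P*Fᵀ+Q)*Hᵀ+R
  have hSfun : HasFDerivAt
      (fun P : Matrix (Fin n_x) (Fin n_x) ℝ => H * (F * P * Fᵀ + Q) * Hᵀ + R)
      (sandwichCLM (H * F) (Fᵀ * Hᵀ)) P₀ := by
    have h1 : HasFDerivAt
        (fun P : Matrix (Fin n_x) (Fin n_x) ℝ => sandwichCLM (H * F) (Fᵀ * Hᵀ) P + (H * Q * Hᵀ + R))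
        (sandwichCLM (H * F) (Fᵀ * Hᵀ)) P₀ :=
      ((sandwichCLM (H * F) (Fᵀ * Hᵀ)).hasFDerivAt).add_const _
    have heq : (fun P : Matrix (Fin n_x) (Fin n_x) ℝ => H * (F * P * Fᵀ + Q) * Hᵀ + R)
        = (fun P => sandwichCLM (H * F) (Fᵀ * Hᵀ) P + (H * Q * Hᵀ + R)) := by
      funext P; simp only [sandwichCLM_apply, Matrix.mul_add, Matrix.add_mul,
        Matrix.mul_assoc]; abel
    rw [heq]; exact h1
  have hSP₀ : H * (F * P₀ * Fᵀ + Q) * Hᵀ + R = S₀ := by rw [hS₀, hP₀m]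
  -- derivative of V : P ↦ (S P)⁻¹
  have hinv : HasFDerivAt (fun M : Matrix (Fin n_z) (Fin n_z) ℝ => M⁻¹)
      (-(sandwichCLM S₀⁻¹ S₀⁻¹)) S₀ := hasFDerivAt_matrix_inv_s5 hS
  have hV : HasFDerivAt
      (fun P : Matrix (Fin n_x) (Fin n_x) ℝ => (H * (F * P * Fᵀ + Q) * Hᵀ + R)⁻¹)
      ((-(sandwichCLM S₀⁻¹ S₀⁻¹)).comp (sandwichCLM (H * F) (Fᵀ * Hᵀ))) P₀ := by
    have : HasFDerivAt (fun M : Matrix (Fin n_z) (Fin n_z) ℝ => M⁻¹)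
        (-(sandwichCLM S₀⁻¹ S₀⁻¹)) (H * (F * P₀ * Fᵀ + Q) * Hᵀ + R) := by rw [hSP₀]; exact hinv
    exact this.comp P₀ hSfun
  -- product rule
  have hG := ContinuousLinearMap.hasFDerivAt_of_bilinear
    (mulB (m := n_x) (n := n_z) (p := n_z)) hU hV
  -- compose with mulVec and add constant μ
  have hF := ((mulVecCLM c).hasFDerivAt.comp P₀ hG).const_add μ
  refine ⟨_, hF, ?_⟩
  intro Δ
  show ((F * P₀ * Fᵀ + Q) * Hᵀ * (-(S₀⁻¹ * (H * F * Δ * (Fᵀ * Hᵀ)) * S₀⁻¹)) + F * Δ * (Fᵀ * Hᵀ) * (H * (F * P₀ * Fᵀ + Q) * Hᵀ + R)⁻¹) *ᵥ c = _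
  rw [hSP₀]
  congr 1
  rw [hK₀, hP₀m]
  simp only [Matrix.sub_mul, Matrix.one_mul, Matrix.add_mul, Matrix.mul_assoc, Matrix.mul_neg,
    Matrix.neg_mul, sub_eq_neg_add]
end
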